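/- Let E be a Bratteli diagram with vertex levels V_n and vertex labels d_v satisfying d_v ≥ Σ_{e ∈ r⁻¹(v)} d_{s(e)}. Define KE by adding, for each level n such that σ_v := d_v − Σ_{e ∈ r⁻¹(v)} d_{s(e)} > 0 for some v ∈ V_{n+1}, a new vertex w_n on level n with d_{w_n} = 1, together with σ_v edges from w_n to each v ∈ V_{n+1}. Then for every vertex v of KE, the number of finite paths in KE beginning at a vertex of S := KE⁰ \ E⁰ and ending at v equals d_v. -/
import Mathlib


/-- A directed graph: edge set `E`, vertex set `V`, with source and range maps. -/
structure DGraph (V E : Type) where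
  src : E → V
  rng : E → V

/-- `IsPathFrom G u v l` : the list of edges `l` forms a directed path from `u` to `v`. -/
def IsPathFrom {V E : Type} (G : DGraph V E) : V → V → List E → Prop
  | u, v, [] => u = v
  | u, v, e :: es => G.src e = u ∧ IsPathFrom G (G.rng e) v es

variable {V E : Type}

/-- `σ_v = d_v - Σ_{e ∈ r⁻¹(v)} d_{s(e)}`. -/
noncomputable def sigmaDef (G : DGraph V E) (d : V → ℕ)
    (hcol : ∀ v, {e | G.rng e = v}.Finite) (v : V) : ℕ :=
  d v - ∑ e ∈ (hcol v).toFinset, d (G.src e)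

/-- Vertices of `KE`: vertices of `E`, together with a new vertex `w_n` for each level `n`
such that some vertex at level `n+1` has `σ_v > 0`. -/
def KVert (G : DGraph V E) (lvl : V → ℕ) (d : V → ℕ)
    (hcol : ∀ v, {e | G.rng e = v}.Finite) : Type :=
  V ⊕ {n : ℕ // ∃ v, lvl v = n + 1 ∧ 0 < sigmaDef G d hcol v}

/-- Edges of `KE`: edges of `E`, together with `σ_v` new edges into each `v`. -/
def KEdge (G : DGraph V E) (d : V → ℕ)
    (hcol : ∀ v, {e | G.rng e = v}.Finite) : Type :=
  E ⊕ ((v : V) × Fin (sigmaDef G d hcol v))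

/-- The graph `KE`: the new edges with range `v` have source the new vertex `w_{lvl v - 1}`. -/
def KGraph (G : DGraph V E) (lvl : V → ℕ) (d : V → ℕ)
    (hcol : ∀ v, {e | G.rng e = v}.Finite) (hlvl : ∀ v, 1 ≤ lvl v) :
    DGraph (KVert G lvl d hcol) (KEdge G d hcol) where
  src := fun e => match e with
    | Sum.inl e => Sum.inl (G.src e)
    | Sum.inr ⟨v, i⟩ =>
        Sum.inr ⟨lvl v - 1, ⟨v, by have := hlvl v; omega, i.pos⟩⟩
  rng := fun e => match e with
    | Sum.inl e => Sum.inl (G.rng e)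
    | Sum.inr ⟨v, _⟩ => Sum.inl v

/-- The labels on `KE`: `d_v` on old vertices, `1` on the new vertices `w_n`. -/
def KLabel (G : DGraph V E) (lvl : V → ℕ) (d : V → ℕ)
    (hcol : ∀ v, {e | G.rng e = v}.Finite) :
    KVert G lvl d hcol → ℕ :=
  Sum.elim d (fun _ => 1)

attribute [reducible] KVert KEdge

/-- Concatenation lemma for paths. -/
theorem isPathFrom_concat {V E : Type} (H : DGraph V E) :
    ∀ (l : List E) (u v : V) (e : E),
      IsPathFrom H u v (l ++ [e]) ↔ IsPathFrom H u (H.src e) l ∧ H.rng e = v := by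
  intro l
  induction l with
  | nil =>
    intro u v e
    simp only [List.nil_append, IsPathFrom]
    constructor
    · rintro ⟨h1, h2⟩; exact ⟨h1.symm, h2⟩
    · rintro ⟨h1, h2⟩; exact ⟨h1.symm, h2⟩
  | cons f fs ih =>
    intro u v e
    show (H.src f = u ∧ IsPathFrom H (H.rng f) v (fs ++ [e])) ↔
      (H.src f = u ∧ IsPathFrom H (H.rng f) (H.src e) fs) ∧ H.rng e = v
    rw [ih]
    tauto

section Aux

variable (G : DGraph V E) (lvl : V → ℕ) (d : V → ℕ)
    (hcol : ∀ v, {e | G.rng e = v}.Finite) (hlvl : ∀ v, 1 ≤ lvl v)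

/-- The set of paths from a new vertex to `x`. -/
def PathsK (x : KVert G lvl d hcol) :
    Set (KVert G lvl d hcol × List (KEdge G d hcol)) :=
  {q | (∃ n, q.1 = Sum.inr n) ∧ IsPathFrom (KGraph G lvl d hcol hlvl) q.1 x q.2}

theorem krng_inl (e : KEdge G d hcol) :
    ∃ w, (KGraph G lvl d hcol hlvl).rng e = Sum.inl w := by
  rcases e with e | ⟨w, i⟩
  · exact ⟨G.rng e, rfl⟩
  · exact ⟨w, rfl⟩

theorem paths_to_new (l : List (KEdge G d hcol)) :
    ∀ (u : KVert G lvl d hcol) n,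
      IsPathFrom (KGraph G lvl d hcol hlvl) u (Sum.inr n) l → u = Sum.inr n ∧ l = [] := by
  induction l with
  | nil => intro u n h; exact ⟨h, rfl⟩
  | cons e es ih =>
    intro u n h
    obtain ⟨hs, hp⟩ := h
    obtain ⟨hu, -⟩ := ih _ _ hp
    obtain ⟨w, hw⟩ := krng_inl G lvl d hcol hlvl e
    rw [hw] at hu
    exact absurd hu (by simp)

theorem pathsK_new (n) :
    PathsK G lvl d hcol hlvl (Sum.inr n) = {((Sum.inr n : KVert G lvl d hcol), ([] : List (KEdge G d hcol)))} := by
  ext ⟨u, l⟩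
  constructor
  · rintro ⟨-, hp⟩
    obtain ⟨hu, hl⟩ := paths_to_new G lvl d hcol hlvl l u n hp
    simp [hu, hl]
  · intro h
    simp only [Set.mem_singleton_iff, Prod.mk.injEq] at h
    obtain ⟨hu, hl⟩ := h
    subst hu; subst hl
    exact ⟨⟨n, rfl⟩, rfl⟩

theorem key (hedge : ∀ e, lvl (G.rng e) = lvl (G.src e) + 1)
    (hlabel : ∀ v, ∑ e ∈ (hcol v).toFinset, d (G.src e) ≤ d v) :
    ∀ k, ∀ v : V, lvl v = k →
      (PathsK G lvl d hcol hlvl (Sum.inl v)).Finite ∧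
      (PathsK G lvl d hcol hlvl (Sum.inl v)).ncard = d v := by
  classical
  intro k
  induction k using Nat.strong_induction_on with
  | _ k ih =>
  intro v hvk
  have hfib : ∀ e : {e : E // G.rng e = v},
      (PathsK G lvl d hcol hlvl (Sum.inl (G.src e.1))).Finite ∧
      (PathsK G lvl d hcol hlvl (Sum.inl (G.src e.1))).ncard = d (G.src e.1) := by
    rintro ⟨e, he⟩
    refine ih (lvl (G.src e)) ?_ _ rfl
    have := hedge e; rw [he] at this; omega
  haveI : Finite {e : E // G.rng e = v} := Set.Finite.to_subtype (hcol v)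
  haveI : ∀ e : {e : E // G.rng e = v},
      Finite ↥(PathsK G lvl d hcol hlvl (Sum.inl (G.src e.1))) := fun e =>
    Set.finite_coe_iff.mpr (hfib e).1
  -- the bijection
  let g : ((e : {e : E // G.rng e = v}) ×
        ↥(PathsK G lvl d hcol hlvl (Sum.inl (G.src e.1)))) ⊕ Fin (sigmaDef G d hcol v) →
      ↥(PathsK G lvl d hcol hlvl (Sum.inl v)) := fun t =>
    Sum.rec
      (fun p => ⟨(p.2.1.1, p.2.1.2 ++ [(Sum.inl p.1.1 : KEdge G d hcol)]), p.2.2.1, by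
        rw [isPathFrom_concat]
        refine ⟨p.2.2.2, ?_⟩
        show Sum.inl (G.rng p.1.1) = Sum.inl v
        rw [p.1.2]⟩)
      (fun i => ⟨((KGraph G lvl d hcol hlvl).src (Sum.inr ⟨v, i⟩),
          [(Sum.inr ⟨v, i⟩ : KEdge G d hcol)]),
        ⟨⟨lvl v - 1, ⟨v, by have := hlvl v; omega, i.pos⟩⟩, rfl⟩, rfl, rfl⟩) t
  have hg : Function.Bijective g := by
    constructor
    · rintro (⟨⟨e₁, he₁⟩, ⟨⟨u₁, l₁⟩, hq₁⟩⟩ | i₁) (⟨⟨e₂, he₂⟩, ⟨⟨u₂, l₂⟩, hq₂⟩⟩ | i₂) h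
      · have h' : ((u₁, l₁ ++ [(Sum.inl e₁ : KEdge G d hcol)]) :
              KVert G lvl d hcol × List (KEdge G d hcol)) =
            (u₂, l₂ ++ [(Sum.inl e₂ : KEdge G d hcol)]) := congrArg Subtype.val h
        obtain ⟨hu, hl⟩ := Prod.mk.injEq .. ▸ h'
        obtain ⟨hl', he⟩ := List.append_inj' hl rfl
        have he' : e₁ = e₂ := by simpa using he
        subst hu; subst hl'; subst he'
        rfl
      · have h' : ((u₁, l₁ ++ [(Sum.inl e₁ : KEdge G d hcol)]) :
              KVert G lvl d hcol × List (KEdge G d hcol)) =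
            ((KGraph G lvl d hcol hlvl).src (Sum.inr ⟨v, i₂⟩),
              [(Sum.inr ⟨v, i₂⟩ : KEdge G d hcol)]) := congrArg Subtype.val h
        exfalso
        have hl : l₁ ++ [(Sum.inl e₁ : KEdge G d hcol)] = [Sum.inr ⟨v, i₂⟩] :=
          congrArg Prod.snd h'
        have hlen : l₁.length + 1 = 1 := by
          have := congrArg List.length hl; simpa using this
        have hl0 : l₁ = [] := by
          cases l₁ with
          | nil => rfl
          | cons a as => simp at hlen
        subst hl0
        simp at hl
      · have h' : (((KGraph G lvl d hcol hlvl).src (Sum.inr ⟨v, i₁⟩),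
              [(Sum.inr ⟨v, i₁⟩ : KEdge G d hcol)]) :
              KVert G lvl d hcol × List (KEdge G d hcol)) =
            (u₂, l₂ ++ [(Sum.inl e₂ : KEdge G d hcol)]) := congrArg Subtype.val h
        exfalso
        have hl : [(Sum.inr ⟨v, i₁⟩ : KEdge G d hcol)] = l₂ ++ [Sum.inl e₂] :=
          congrArg Prod.snd h'
        have hlen : l₂.length + 1 = 1 := by
          have := congrArg List.length hl; simpa using this
        have hl0 : l₂ = [] := by
          cases l₂ with
          | nil => rfl
          | cons a as => simp at hlen
        subst hl0
        simp at hl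
      · have hl : [(Sum.inr ⟨v, i₁⟩ : KEdge G d hcol)] = [Sum.inr ⟨v, i₂⟩] :=
          congrArg (fun q => q.val.2) h
        have : i₁ = i₂ := by simpa using hl
        rw [this]
    · rintro ⟨⟨u, l⟩, ⟨⟨n, hn⟩, hp⟩⟩
      have hlne : l ≠ [] := by
        intro hc
        subst hc
        have hn' : u = Sum.inr n := hn
        have h2 : u = Sum.inl v := hp
        rw [hn'] at h2
        simp at h2
      obtain hc | ⟨l', f, hl⟩ := l.eq_nil_or_concat'
      · exact absurd hc hlne
      subst hl
      rw [isPathFrom_concat] at hp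
      obtain ⟨hp', hf⟩ := hp
      rcases f with e | ⟨v', i⟩
      · have he : G.rng e = v := by
          have h2 : Sum.inl (G.rng e) = (Sum.inl v : KVert G lvl d hcol) := hf
          exact Sum.inl.inj h2
        exact ⟨Sum.inl ⟨⟨e, he⟩, ⟨(u, l'), ⟨⟨n, hn⟩, hp'⟩⟩⟩, Subtype.ext rfl⟩
      · have hv' : v' = v := by
          have h2 : Sum.inl v' = (Sum.inl v : KVert G lvl d hcol) := hf
          exact Sum.inl.inj h2
        subst hv'
        obtain ⟨hu, hl'⟩ := paths_to_new G lvl d hcol hlvl l' u _ hp'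
        subst hl'
        exact ⟨Sum.inr i, Subtype.ext (Prod.ext hu.symm rfl)⟩
  haveI hfin : Finite ↥(PathsK G lvl d hcol hlvl (Sum.inl v)) :=
    Finite.of_surjective g hg.2
  constructor
  · exact Set.finite_coe_iff.mp hfin
  · have hcard : Nat.card (((e : {e : E // G.rng e = v}) ×
          ↥(PathsK G lvl d hcol hlvl (Sum.inl (G.src e.1)))) ⊕ Fin (sigmaDef G d hcol v)) =
        Nat.card ↥(PathsK G lvl d hcol hlvl (Sum.inl v)) :=
      Nat.card_eq_of_bijective g hg
    rw [← Nat.card_coe_set_eq, ← hcard, Nat.card_sum]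
    have hTl : Nat.card ((e : {e : E // G.rng e = v}) ×
          ↥(PathsK G lvl d hcol hlvl (Sum.inl (G.src e.1)))) =
        ∑ e ∈ (hcol v).toFinset, d (G.src e) := by
      haveI : Fintype {e : E // G.rng e = v} := Fintype.ofFinite _
      haveI : ∀ e : {e : E // G.rng e = v},
          Fintype ↥(PathsK G lvl d hcol hlvl (Sum.inl (G.src e.1))) := fun e =>
        Fintype.ofFinite _
      rw [Nat.card_eq_fintype_card, Fintype.card_sigma]
      have h1 : ∀ e : {e : E // G.rng e = v},
          Fintype.card ↥(PathsK G lvl d hcol hlvl (Sum.inl (G.src e.1))) = d (G.src e.1) := by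
        intro e
        rw [← Nat.card_eq_fintype_card, Nat.card_coe_set_eq]
        exact (hfib e).2
      rw [Finset.sum_congr rfl (fun e _ => h1 e)]
      rw [← Finset.sum_coe_sort ((hcol v).toFinset) (fun e => d (G.src e))]
      apply Fintype.sum_equiv (Equiv.subtypeEquivRight (fun e => by
        simp [Set.Finite.mem_toFinset]))
      intro e
      rfl
    rw [hTl, Nat.card_eq_fintype_card, Fintype.card_fin]
    have := hlabel v
    simp only [sigmaDef]
    omega

end Aux

/-- For a Bratteli diagram `E` (finite levels `V_n`, `n ≥ 1`, edges from level `n` to level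
`n+1`, labels `d_v ≥ Σ_{e ∈ r⁻¹(v)} d_{s(e)} > 0`), the number of finite paths in `KE`
beginning at a vertex of `S = KE⁰ \ E⁰` and ending at `x` equals `d_x`, for every vertex `x`
of `KE`.  (A path is recorded as its starting vertex together with its list of edges.) -/
theorem stmt0 (G : DGraph V E) (lvl : V → ℕ) (d : V → ℕ)
    (hlvl : ∀ v, 1 ≤ lvl v)
    (hfinlevel : ∀ n, {v | lvl v = n}.Finite)
    (hedge : ∀ e, lvl (G.rng e) = lvl (G.src e) + 1)
    (hcol : ∀ v, {e | G.rng e = v}.Finite)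
    (hdpos : ∀ v, 0 < d v)
    (hlabel : ∀ v, ∑ e ∈ (hcol v).toFinset, d (G.src e) ≤ d v) :
    ∀ x : KVert G lvl d hcol,
      Set.ncard {q : KVert G lvl d hcol × List (KEdge G d hcol) |
          (∃ n, q.1 = Sum.inr n) ∧ IsPathFrom (KGraph G lvl d hcol hlvl) q.1 x q.2}
        = KLabel G lvl d hcol x := by
  intro x
  rcases x with v | n
  · exact (key G lvl d hcol hlvl hedge hlabel (lvl v) v rfl).2
  · show (PathsK G lvl d hcol hlvl (Sum.inr n)).ncard = 1
    rw [pathsK_new]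
    exact Set.ncard_singleton _
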